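/- Let n and k be integers with 1 ≤ k ≤ n, and let f : {0,1}^n → ℝ be defined by f(x) = ∑_{K ⊆ [n], |K| = k} ∑_{∅ ≠ J ⊆ K} (−1)^{|J|+1} ∏_{j∈J} x_j. Then there exist reals (y_I)_{I ⊆ [n]} such that: (i) ∑_{I ⊆ [n]} y_I = 1; (ii) the P_{k−1}(n) × P_{k−1}(n) matrix ∑_{I ⊆ [n]} y_I Z_I Z_Iᵀ is positive semidefinite, where Z_I are (k−1)-zeta vectors; and (iii) ∑_{I ⊆ [n]} f(x_I) y_I > C(n,k), where x_I ∈ {0,1}^n is the indicator vector of I and C(n,k) = max_{x ∈ {0,1}^n} f(x). Hence the level-(k−1) Lasserre relaxation does not solve the unconstrained maximization of the degree-k 0/1 polynomial f exactly. -/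

import Mathlib

open Finset Matrix

noncomputable def zeta (n d : ℕ) (I : Finset (Fin n)) :
    {J : Finset (Fin n) // J.card ≤ d} → ℝ :=
  fun J => if (J : Finset (Fin n)) ⊆ I then 1 else 0

noncomputable def fPoly (n k : ℕ) (x : Fin n → ℝ) : ℝ :=
  ∑ K ∈ Finset.powersetCard k (Finset.univ : Finset (Fin n)),
    ∑ J ∈ K.powerset.filter (fun J => J ≠ ∅), (-1 : ℝ) ^ (J.card + 1) * ∏ j ∈ J, x j

noncomputable def indVec (n : ℕ) (I : Finset (Fin n)) : Fin n → ℝ :=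
  fun i => if i ∈ I then 1 else 0

/-! ### Auxiliary lemmas -/

lemma sum_pm (n : ℕ) (s : Finset (Fin n)) :
    ∑ A ∈ s.powerset, (-1:ℝ)^A.card = if s = ∅ then 1 else 0 := by
  have h := Finset.sum_powerset_neg_one_pow_card (x := s)
  have h2 : ((∑ m ∈ s.powerset, (-1 : ℤ) ^ m.card : ℤ) : ℝ) = ∑ A ∈ s.powerset, (-1:ℝ)^A.card := by
    push_cast; rfl
  rw [← h2, h]; split_ifs <;> simp

/-- the coefficients expressing `e∅` in terms of zeta vectors of large sets,
indexed by the complement `A` of a large set -/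
noncomputable def gam (n d : ℕ) (A : Finset (Fin n)) : ℝ :=
  (-1:ℝ)^A.card * ∑ C : Finset (Fin n), if A ⊆ C ∧ C.card ≤ d then (-1:ℝ)^C.card else 0

lemma star_id (n d : ℕ) (J : Finset (Fin n)) (hJ : J.card ≤ d) :
    ∑ I : Finset (Fin n), (if Iᶜ.card ≤ d then gam n d Iᶜ else 0) * (if J ⊆ I then 1 else 0)
      = if J = ∅ then 1 else 0 := by
  -- reindex I ↦ Iᶜ
  have hre : ∑ I : Finset (Fin n), (if Iᶜ.card ≤ d then gam n d Iᶜ else 0) * (if J ⊆ I then 1 else 0)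
      = ∑ A : Finset (Fin n), (if A.card ≤ d then gam n d A else 0) * (if J ⊆ Aᶜ then 1 else 0) := by
    refine Fintype.sum_bijective (fun I : Finset (Fin n) => Iᶜ) (Function.Involutive.bijective compl_compl) _ _ (fun I => ?_)
    simp
  rw [hre]
  have hsub : ∀ A : Finset (Fin n), (J ⊆ Aᶜ) ↔ (A ∩ J = ∅) := by
    intro A
    constructor
    · intro h
      ext i; simp only [Finset.mem_inter, Finset.notMem_empty, iff_false, not_and]
      intro hiA hiJ
      exact (Finset.mem_compl.1 (h hiJ)) hiA
    · intro h i hiJ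
      rw [Finset.mem_compl]
      intro hiA
      have : i ∈ A ∩ J := Finset.mem_inter.2 ⟨hiA, hiJ⟩
      rw [h] at this; exact absurd this (Finset.notMem_empty i)
  have step1 : ∀ A : Finset (Fin n),
      (if A.card ≤ d then gam n d A else 0) * (if J ⊆ Aᶜ then 1 else 0)
      = ∑ C : Finset (Fin n), if A ∈ (C \ J).powerset ∧ C.card ≤ d then (-1:ℝ)^A.card * (-1:ℝ)^C.card else 0 := by
    intro A
    rw [gam]
    by_cases hAJ : A ∩ J = ∅
    · rw [if_pos ((hsub A).2 hAJ), mul_one]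
      by_cases hAd : A.card ≤ d
      · rw [if_pos hAd, Finset.mul_sum]
        refine Finset.sum_congr rfl (fun C _ => ?_)
        have : (A ∈ (C \ J).powerset ∧ C.card ≤ d) ↔ (A ⊆ C ∧ C.card ≤ d) := by
          simp only [Finset.mem_powerset]
          constructor
          · rintro ⟨h1, h2⟩; exact ⟨h1.trans (Finset.sdiff_subset), h2⟩
          · rintro ⟨h1, h2⟩
            refine ⟨Finset.subset_sdiff.2 ⟨h1, ?_⟩, h2⟩
            rw [Finset.disjoint_iff_inter_eq_empty]; exact hAJ
        rw [if_congr this rfl rfl]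
        split_ifs <;> simp
      · rw [if_neg hAd]
        symm
        refine Finset.sum_eq_zero (fun C _ => ?_)
        rw [if_neg]
        rintro ⟨h1, h2⟩
        exact hAd (le_trans (Finset.card_le_card ((Finset.mem_powerset.1 h1).trans (Finset.sdiff_subset))) h2)
    · rw [if_neg (fun h => hAJ ((hsub A).1 h)), mul_zero]
      symm
      refine Finset.sum_eq_zero (fun C _ => ?_)
      rw [if_neg]
      rintro ⟨h1, _⟩
      have := Finset.mem_powerset.1 h1
      apply hAJ
      ext i; simp only [Finset.mem_inter, Finset.notMem_empty, iff_false, not_and]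
      intro hiA hiJ
      exact (Finset.mem_sdiff.1 (this hiA)).2 hiJ
  rw [Finset.sum_congr rfl (fun A _ => step1 A), Finset.sum_comm]
  have step2 : ∀ C : Finset (Fin n),
      ∑ A : Finset (Fin n), (if A ∈ (C \ J).powerset ∧ C.card ≤ d then (-1:ℝ)^A.card * (-1:ℝ)^C.card else 0)
      = if C ⊆ J ∧ C.card ≤ d then (-1:ℝ)^C.card else 0 := by
    intro C
    by_cases hCd : C.card ≤ d
    · simp only [hCd, and_true]
      rw [show (∑ A : Finset (Fin n), if A ∈ (C \ J).powerset then (-1:ℝ)^A.card * (-1:ℝ)^C.card else 0)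
          = ∑ A ∈ (C \ J).powerset, (-1:ℝ)^A.card * (-1:ℝ)^C.card from by
        rw [Finset.sum_ite_mem, Finset.univ_inter]]
      rw [← Finset.sum_mul, sum_pm]
      by_cases h : C ⊆ J <;> simp [Finset.sdiff_eq_empty_iff_subset, h]
    · simp only [hCd, and_false, if_false]
      exact Finset.sum_eq_zero (fun A _ => rfl)
  rw [Finset.sum_congr rfl (fun C _ => step2 C)]
  have step3 : ∀ C : Finset (Fin n), (if C ⊆ J ∧ C.card ≤ d then (-1:ℝ)^C.card else 0)
      = if C ∈ J.powerset then (-1:ℝ)^C.card else 0 := by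
    intro C
    simp only [Finset.mem_powerset]
    by_cases h : C ⊆ J
    · simp only [h, true_and, if_true, if_pos (le_trans (Finset.card_le_card h) hJ)]
    · simp [h]
  rw [Finset.sum_congr rfl (fun C _ => step3 C), Finset.sum_ite_mem, Finset.univ_inter, sum_pm]

lemma prod_ind (n : ℕ) (x : Fin n → ℝ) (hx : ∀ i, x i = 0 ∨ x i = 1) (J : Finset (Fin n)) :
    ∏ j ∈ J, x j = if J ⊆ Finset.univ.filter (fun i => x i = 1) then 1 else 0 := by
  split_ifs with h
  · refine Finset.prod_eq_one (fun j hj => ?_)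
    have := h hj
    simp only [Finset.mem_filter] at this
    exact this.2
  · rw [Finset.not_subset] at h
    obtain ⟨j, hjJ, hj⟩ := h
    simp only [Finset.mem_filter, Finset.mem_univ, true_and] at hj
    refine Finset.prod_eq_zero hjJ ?_
    rcases hx j with h0 | h1
    · exact h0
    · exact absurd h1 hj

lemma innerSumEval (n : ℕ) (x : Fin n → ℝ) (hx : ∀ i, x i = 0 ∨ x i = 1) (K : Finset (Fin n)) :
    ∑ J ∈ K.powerset.filter (fun J => J ≠ ∅), (-1:ℝ)^(J.card+1) * ∏ j ∈ J, x j
      = if K ∩ Finset.univ.filter (fun i => x i = 1) = ∅ then 0 else 1 := by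
  set I := Finset.univ.filter (fun i => x i = 1) with hI
  have h1 : ∑ J ∈ K.powerset.filter (fun J => J ≠ ∅), (-1:ℝ)^(J.card+1) * ∏ j ∈ J, x j
      = ∑ J ∈ K.powerset.filter (fun J => J ≠ ∅), (if J ⊆ I then (-1:ℝ)^(J.card+1) else 0) := by
    refine Finset.sum_congr rfl (fun J _ => ?_)
    rw [prod_ind n x hx J, ← hI]
    split_ifs <;> simp
  rw [h1, Finset.sum_ite, Finset.sum_const_zero, add_zero]
  have h2 : (K.powerset.filter (fun J => J ≠ ∅)).filter (fun J => J ⊆ I)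
      = (K ∩ I).powerset.filter (fun J => J ≠ ∅) := by
    ext J
    simp only [Finset.mem_filter, Finset.mem_powerset, Finset.subset_inter_iff]
    tauto
  rw [h2, Finset.filter_ne', Finset.sum_erase_eq_sub (Finset.empty_mem_powerset _)]
  have h3 : ∑ J ∈ (K ∩ I).powerset, (-1:ℝ)^(J.card+1)
      = -(if K ∩ I = ∅ then 1 else 0) := by
    rw [← sum_pm n (K ∩ I), ← Finset.sum_neg_distrib]
    refine Finset.sum_congr rfl (fun J _ => ?_)
    rw [pow_succ]; ring
  rw [h3]
  simp only [Finset.card_empty, pow_one, zero_add]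
  split_ifs <;> ring

lemma fPoly_eq_card (n k : ℕ) (x : Fin n → ℝ) (hx : ∀ i, x i = 0 ∨ x i = 1) :
    fPoly n k x = ∑ K ∈ Finset.powersetCard k (Finset.univ : Finset (Fin n)),
      (if K ∩ Finset.univ.filter (fun i => x i = 1) = ∅ then (0:ℝ) else 1) :=
  Finset.sum_congr rfl (fun K _ => innerSumEval n x hx K)

lemma fPoly_le (n k : ℕ) (x : Fin n → ℝ) (hx : ∀ i, x i = 0 ∨ x i = 1) :
    fPoly n k x ≤ (n.choose k : ℝ) := by
  rw [fPoly_eq_card n k x hx]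
  calc ∑ K ∈ Finset.powersetCard k (Finset.univ : Finset (Fin n)),
      (if K ∩ Finset.univ.filter (fun i => x i = 1) = ∅ then (0:ℝ) else 1)
      ≤ ∑ K ∈ Finset.powersetCard k (Finset.univ : Finset (Fin n)), (1:ℝ) := by
        refine Finset.sum_le_sum (fun K _ => ?_)
        split_ifs <;> norm_num
    _ = (n.choose k : ℝ) := by
        rw [Finset.sum_const, Finset.card_powersetCard, Finset.card_univ, Fintype.card_fin]
        simp

lemma filter_indVec (n : ℕ) (I : Finset (Fin n)) :
    Finset.univ.filter (fun i => indVec n I i = 1) = I := by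
  ext i
  simp only [Finset.mem_filter, Finset.mem_univ, true_and, indVec]
  by_cases h : i ∈ I <;> simp [h]

lemma fPoly_max (n k : ℕ) (hk : 1 ≤ k) (I : Finset (Fin n)) (hI : Iᶜ.card ≤ k - 1) :
    fPoly n k (indVec n I) = (n.choose k : ℝ) := by
  rw [fPoly_eq_card n k _ (fun i => by unfold indVec; split_ifs <;> simp), filter_indVec]
  have : ∀ K ∈ Finset.powersetCard k (Finset.univ : Finset (Fin n)),
      (if K ∩ I = ∅ then (0:ℝ) else 1) = 1 := by
    intro K hK
    rw [Finset.mem_powersetCard] at hK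
    rw [if_neg]
    intro h
    have hKc : K ⊆ Iᶜ := by
      intro i hi
      rw [Finset.mem_compl]
      intro hiI
      have : i ∈ K ∩ I := Finset.mem_inter.2 ⟨hi, hiI⟩
      rw [h] at this; exact absurd this (Finset.notMem_empty i)
    have := Finset.card_le_card hKc
    rw [hK.2] at this
    omega
  rw [Finset.sum_congr rfl this, Finset.sum_const, Finset.card_powersetCard, Finset.card_univ,
    Fintype.card_fin]
  simp

lemma fPoly_empty (n k : ℕ) : fPoly n k (indVec n (∅ : Finset (Fin n))) = 0 := by
  rw [fPoly_eq_card n k _ (fun i => by unfold indVec; split_ifs <;> simp), filter_indVec]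
  refine Finset.sum_eq_zero (fun K _ => ?_)
  simp

lemma fPoly_ones (n k : ℕ) (hk : 1 ≤ k) :
    fPoly n k (fun _ => (1:ℝ)) = (n.choose k : ℝ) := by
  rw [fPoly_eq_card n k _ (fun i => Or.inr rfl)]
  have : ∀ K ∈ Finset.powersetCard k (Finset.univ : Finset (Fin n)),
      (if K ∩ Finset.univ.filter (fun i => (1:ℝ) = 1) = ∅ then (0:ℝ) else 1) = 1 := by
    intro K hK
    rw [Finset.mem_powersetCard] at hK
    rw [if_neg]
    have hf : Finset.univ.filter (fun _ : Fin n => (1:ℝ) = 1) = Finset.univ := by simp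
    rw [hf, Finset.inter_univ]
    intro h
    rw [h, Finset.card_empty] at hK
    omega
  rw [Finset.sum_congr rfl this, Finset.sum_const, Finset.card_powersetCard, Finset.card_univ,
    Fintype.card_fin]
  simp

lemma quadform (n d : ℕ) (y : Finset (Fin n) → ℝ) (x : {J : Finset (Fin n) // J.card ≤ d} → ℝ) :
    dotProduct x ((∑ I : Finset (Fin n), y I • vecMulVec (zeta n d I) (zeta n d I)) *ᵥ x)
      = ∑ I : Finset (Fin n), y I * (dotProduct (zeta n d I) x)^2 := by
  simp only [dotProduct, mulVec, Matrix.sum_apply, Matrix.smul_apply, vecMulVec_apply,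
    smul_eq_mul, dotProduct, Finset.mul_sum, Finset.sum_mul]
  rw [show (∑ a : { J : Finset (Fin n) // J.card ≤ d }, ∑ b : { J : Finset (Fin n) // J.card ≤ d }, ∑ I : Finset (Fin n),
        x a * (y I * (zeta n d I a * zeta n d I b) * x b))
      = ∑ a : { J : Finset (Fin n) // J.card ≤ d }, ∑ I : Finset (Fin n), ∑ b : { J : Finset (Fin n) // J.card ≤ d },
        x a * (y I * (zeta n d I a * zeta n d I b) * x b) from
    Finset.sum_congr rfl (fun a _ => Finset.sum_comm), Finset.sum_comm]
  refine Finset.sum_congr rfl (fun I _ => ?_)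
  rw [sq, Finset.sum_mul_sum, Finset.mul_sum]
  refine Finset.sum_congr rfl (fun a _ => ?_)
  rw [Finset.mul_sum]
  exact Finset.sum_congr rfl (fun b _ => by ring)

lemma herm (n d : ℕ) (y : Finset (Fin n) → ℝ) :
    (∑ I : Finset (Fin n), y I • vecMulVec (zeta n d I) (zeta n d I)).IsHermitian := by
  refine Matrix.IsHermitian.ext (fun i j => ?_)
  simp only [Matrix.sum_apply, Matrix.smul_apply, vecMulVec_apply, smul_eq_mul, star_trivial]
  exact Finset.sum_congr rfl (fun I _ => by ring)

/-- splitting the sum against our particular signed measure -/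
lemma ysum (n d : ℕ) (a b r : ℝ) (g : Finset (Fin n) → ℝ) :
    ∑ I : Finset (Fin n),
        (a * (if Iᶜ.card ≤ d then r else 0) - b * (if I = ∅ then 1 else 0)) * g I
      = a * r * (∑ I ∈ Finset.univ.filter (fun I : Finset (Fin n) => Iᶜ.card ≤ d), g I)
        - b * g ∅ := by
  simp only [sub_mul, Finset.sum_sub_distrib]
  congr 1
  · rw [Finset.mul_sum, Finset.sum_filter]
    refine Finset.sum_congr rfl (fun I _ => ?_)
    split_ifs <;> ring
  · rw [show (∑ I : Finset (Fin n), b * (if I = ∅ then 1 else 0) * g I)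
        = ∑ I : Finset (Fin n), (if I = ∅ then b * g I else 0) from
      Finset.sum_congr rfl (fun I _ => by split_ifs <;> ring)]
    rw [Finset.sum_ite_eq' Finset.univ (∅ : Finset (Fin n)) (fun I => b * g I)]
    simp

/-- the zeta vector of `∅` lies in the span of zeta vectors of large sets -/
lemma t0_eq (n d : ℕ) (x : {J : Finset (Fin n) // J.card ≤ d} → ℝ) :
    dotProduct (zeta n d (∅ : Finset (Fin n))) x
      = ∑ I ∈ Finset.univ.filter (fun I : Finset (Fin n) => Iᶜ.card ≤ d),
          gam n d Iᶜ * dotProduct (zeta n d I) x := by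
  unfold dotProduct zeta
  rw [show (∑ I ∈ Finset.univ.filter (fun I : Finset (Fin n) => Iᶜ.card ≤ d),
        gam n d Iᶜ * ∑ J : {J : Finset (Fin n) // J.card ≤ d}, (if (J : Finset (Fin n)) ⊆ I then 1 else 0) * x J)
      = ∑ I ∈ Finset.univ.filter (fun I : Finset (Fin n) => Iᶜ.card ≤ d),
          ∑ J : {J : Finset (Fin n) // J.card ≤ d}, gam n d Iᶜ * ((if (J : Finset (Fin n)) ⊆ I then 1 else 0) * x J) from
    Finset.sum_congr rfl (fun I _ => Finset.mul_sum _ _ _), Finset.sum_comm]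
  refine Finset.sum_congr rfl (fun J _ => ?_)
  have key : ∑ I ∈ Finset.univ.filter (fun I : Finset (Fin n) => Iᶜ.card ≤ d),
      gam n d Iᶜ * (if (J : Finset (Fin n)) ⊆ I then 1 else 0)
      = if (J : Finset (Fin n)) = ∅ then 1 else 0 := by
    rw [← star_id n d (J : Finset (Fin n)) J.2, Finset.sum_filter]
    refine (Finset.sum_congr rfl (fun I _ => ?_)).symm
    split_ifs <;> ring
  calc (if (J : Finset (Fin n)) ⊆ ∅ then (1:ℝ) else 0) * x J
      = (if (J : Finset (Fin n)) = ∅ then (1:ℝ) else 0) * x J := by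
        rw [if_congr Finset.subset_empty rfl rfl]
    _ = (∑ I ∈ Finset.univ.filter (fun I : Finset (Fin n) => Iᶜ.card ≤ d),
          gam n d Iᶜ * (if (J : Finset (Fin n)) ⊆ I then 1 else 0)) * x J := by rw [key]
    _ = ∑ I ∈ Finset.univ.filter (fun I : Finset (Fin n) => Iᶜ.card ≤ d),
          gam n d Iᶜ * ((if (J : Finset (Fin n)) ⊆ I then 1 else 0) * x J) := by
        rw [Finset.sum_mul]
        exact Finset.sum_congr rfl (fun I _ => by ring)

/-! ### The construction -/

noncomputable def Sfam (n d : ℕ) : Finset (Finset (Fin n)) :=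
  Finset.univ.filter (fun I : Finset (Fin n) => Iᶜ.card ≤ d)

noncomputable def Bval (n d : ℕ) : ℝ := ∑ I ∈ Sfam n d, (gam n d Iᶜ) ^ 2

noncomputable def epsval (n d : ℕ) : ℝ := (((Sfam n d).card : ℝ) * (Bval n d + 1))⁻¹

noncomputable def yfun (n d : ℕ) : Finset (Fin n) → ℝ := fun I =>
  (1 + epsval n d) * (if Iᶜ.card ≤ d then ((Sfam n d).card : ℝ)⁻¹ else 0)
    - epsval n d * (if I = ∅ then 1 else 0)

lemma Sfam_card_pos (n d : ℕ) : 0 < ((Sfam n d).card : ℝ) := by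
  have : (Finset.univ : Finset (Fin n)) ∈ Sfam n d := by
    simp [Sfam, Finset.compl_univ]
  exact_mod_cast Finset.card_pos.2 ⟨_, this⟩

lemma Bval_nonneg (n d : ℕ) : 0 ≤ Bval n d :=
  Finset.sum_nonneg (fun I _ => sq_nonneg _)

lemma epsval_pos (n d : ℕ) : 0 < epsval n d := by
  rw [epsval]
  have h1 := Sfam_card_pos n d
  have h2 := Bval_nonneg n d
  positivity

lemma yfun_sum (n d : ℕ) (g : Finset (Fin n) → ℝ) :
    ∑ I : Finset (Fin n), yfun n d I * g I
      = (1 + epsval n d) * ((Sfam n d).card : ℝ)⁻¹ * (∑ I ∈ Sfam n d, g I)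
        - epsval n d * g ∅ :=
  ysum n d (1 + epsval n d) (epsval n d) ((Sfam n d).card : ℝ)⁻¹ g

lemma mass_core (Nr ε : ℝ) (hNr : 0 < Nr) : (1 + ε) * Nr⁻¹ * Nr - ε * 1 = 1 := by
  field_simp; ring

lemma psd_core (Nr B T t ε : ℝ) (hNr : 0 < Nr) (hB : 0 ≤ B) (hT : 0 ≤ T)
    (hCS : t ^ 2 ≤ B * T) (hε : ε = (Nr * (B + 1))⁻¹) :
    0 ≤ (1 + ε) * Nr⁻¹ * T - ε * t ^ 2 := by
  have hε0 : 0 < ε := by rw [hε]; positivity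
  have hεB : ε * (B + 1) = Nr⁻¹ := by rw [hε]; field_simp
  have h1 : ε * t ^ 2 ≤ ε * (B * T) := mul_le_mul_of_nonneg_left hCS hε0.le
  have h2 : ε * (B * T) ≤ ε * (B + 1) * T := by nlinarith
  have h3 : Nr⁻¹ * T ≤ (1 + ε) * Nr⁻¹ * T := by
    have h4 : 0 ≤ ε * (Nr⁻¹ * T) := by positivity
    nlinarith
  rw [hεB] at h2
  linarith

lemma obj_core (c Nr ε : ℝ) (hNr : 0 < Nr) (hε : 0 < ε) (hc : 1 ≤ c) :
    c < (1 + ε) * Nr⁻¹ * (Nr * c) - ε * 0 := by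
  have : (1 + ε) * Nr⁻¹ * (Nr * c) = (1 + ε) * c := by field_simp
  rw [this]
  nlinarith

lemma yfun_mass (n d : ℕ) : ∑ I : Finset (Fin n), yfun n d I = 1 := by
  have h1 : ∑ I : Finset (Fin n), yfun n d I = ∑ I : Finset (Fin n), yfun n d I * 1 := by
    exact Finset.sum_congr rfl (fun I _ => (mul_one _).symm)
  rw [h1, yfun_sum n d (fun _ => 1), Finset.sum_const, nsmul_eq_mul, mul_one]
  exact mass_core _ _ (Sfam_card_pos n d)

lemma yfun_psd (n d : ℕ) :
    Matrix.PosSemidef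
      (∑ I : Finset (Fin n), yfun n d I • Matrix.vecMulVec (zeta n d I) (zeta n d I)) := by
  refine Matrix.PosSemidef.of_dotProduct_mulVec_nonneg (herm n d (yfun n d)) (fun x => ?_)
  rw [star_trivial, quadform n d (yfun n d) x,
    yfun_sum n d (fun I => (dotProduct (zeta n d I) x) ^ 2)]
  have hT0 : 0 ≤ ∑ I ∈ Sfam n d, (dotProduct (zeta n d I) x) ^ 2 :=
    Finset.sum_nonneg (fun I _ => sq_nonneg _)
  have hCS : (dotProduct (zeta n d (∅ : Finset (Fin n))) x) ^ 2
      ≤ Bval n d * ∑ I ∈ Sfam n d, (dotProduct (zeta n d I) x) ^ 2 := by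
    have h := t0_eq n d x
    rw [show (Finset.univ.filter (fun I : Finset (Fin n) => Iᶜ.card ≤ d)) = Sfam n d from rfl] at h
    rw [h]
    exact Finset.sum_mul_sq_le_sq_mul_sq (Sfam n d) _ _
  exact psd_core _ _ _ _ _ (Sfam_card_pos n d) (Bval_nonneg n d) hT0 hCS rfl

lemma yfun_obj (n k : ℕ) (hk : 1 ≤ k) (hkn : k ≤ n) :
    (n.choose k : ℝ) < ∑ I : Finset (Fin n), fPoly n k (indVec n I) * yfun n (k - 1) I := by
  have h1 : ∑ I : Finset (Fin n), fPoly n k (indVec n I) * yfun n (k - 1) I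
      = ∑ I : Finset (Fin n), yfun n (k - 1) I * fPoly n k (indVec n I) :=
    Finset.sum_congr rfl (fun I _ => mul_comm _ _)
  rw [h1, yfun_sum n (k - 1) (fun I => fPoly n k (indVec n I))]
  have hmax : ∑ I ∈ Sfam n (k - 1), fPoly n k (indVec n I)
      = ((Sfam n (k - 1)).card : ℝ) * (n.choose k : ℝ) := by
    rw [Finset.sum_congr rfl (fun I hI => fPoly_max n k hk I (by
      simpa [Sfam] using hI)), Finset.sum_const, nsmul_eq_mul]
  rw [hmax, fPoly_empty n k]
  have hc : (1 : ℝ) ≤ (n.choose k : ℝ) := by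
    exact_mod_cast Nat.one_le_iff_ne_zero.2 (Nat.choose_pos hkn).ne'
  exact obj_core _ _ _ (Sfam_card_pos n (k - 1)) (epsval_pos n (k - 1)) hc

theorem stmt_2 (n k : ℕ) (hk : 1 ≤ k) (hkn : k ≤ n) :
    ∃ y : Finset (Fin n) → ℝ,
      (∑ I : Finset (Fin n), y I = 1) ∧
      Matrix.PosSemidef
        (∑ I : Finset (Fin n),
          y I • Matrix.vecMulVec (zeta n (k - 1) I) (zeta n (k - 1) I)) ∧
      (∀ x : Fin n → ℝ, (∀ i, x i = 0 ∨ x i = 1) → fPoly n k x ≤ (n.choose k : ℝ)) ∧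
      (∃ x : Fin n → ℝ, (∀ i, x i = 0 ∨ x i = 1) ∧ fPoly n k x = (n.choose k : ℝ)) ∧
      ((n.choose k : ℝ) < ∑ I : Finset (Fin n), fPoly n k (indVec n I) * y I) :=
  ⟨yfun n (k - 1), yfun_mass n (k - 1), yfun_psd n (k - 1),
    fun x hx => fPoly_le n k x hx,
    ⟨fun _ => 1, fun _ => Or.inr rfl, fPoly_ones n k hk⟩,
    yfun_obj n k hk hkn⟩
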